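/- arXiv:2507.05472 — 2 statements merged into one kernel-verified Lean document; each statement's English description precedes it below -/
import Mathlib

section
/- If M, K are symmetric positive definite and D symmetric positive semidefinite, then every eigenvalue λ ∈ ℂ of the quadratic pencil λ² M + λ D + K (i.e., det(λ²M + λD + K) = 0) has non-positive real part. -/
open Matrix Complex

lemma re_quad {n : ℕ} (A : Matrix (Fin n) (Fin n) ℝ) (v : Fin n → ℂ) :
    (star v ⬝ᵥ (A.map Complex.ofReal) *ᵥ v).re
      = (fun i => (v i).re) ⬝ᵥ A *ᵥ (fun i => (v i).re)
        + (fun i => (v i).im) ⬝ᵥ A *ᵥ (fun i => (v i).im) := by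
  simp only [dotProduct, mulVec, map_apply, Pi.star_apply, Finset.mul_sum, Complex.re_sum,
    Complex.mul_re, Complex.mul_im, Complex.conj_re, Complex.conj_im, Complex.ofReal_re,
    Complex.ofReal_im, RCLike.star_def]
  rw [← Finset.sum_add_distrib]
  refine Finset.sum_congr rfl fun i _ => ?_
  rw [← Finset.sum_add_distrib]
  refine Finset.sum_congr rfl fun j _ => ?_
  ring

lemma quad_real {n : ℕ} (A : Matrix (Fin n) (Fin n) ℝ) (hA : A.IsHermitian) (v : Fin n → ℂ) :
    star v ⬝ᵥ (A.map Complex.ofReal) *ᵥ v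
      = ((star v ⬝ᵥ (A.map Complex.ofReal) *ᵥ v).re : ℂ) := by
  have hB : (A.map (Complex.ofReal)).IsHermitian :=
    hA.map _ (fun x => by simp [Complex.conj_ofReal])
  have hc : (starRingEnd ℂ) (star v ⬝ᵥ (A.map Complex.ofReal) *ᵥ v)
      = star v ⬝ᵥ (A.map Complex.ofReal) *ᵥ v := by
    rw [starRingEnd_apply, ← star_dotProduct_star, star_star, star_mulVec, hB.eq,
      ← dotProduct_mulVec]
  exact (Complex.conj_eq_iff_re.mp hc).symm

theorem stmt_9 (n : ℕ)
    (M D K : Matrix (Fin n) (Fin n) ℝ)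
    (hM : M.PosDef) (hK : K.PosDef) (hD : D.PosSemidef)
    (l : ℂ)
    (hdet : (l ^ 2 • M.map (Complex.ofReal) + l • D.map (Complex.ofReal)
      + K.map (Complex.ofReal)).det = 0) :
    l.re ≤ 0 := by
  by_contra hpos
  push_neg at hpos
  obtain ⟨v, hv, hveq⟩ := Matrix.exists_mulVec_eq_zero_iff.mpr hdet
  set a : Fin n → ℝ := fun i => (v i).re with ha_def
  set b : Fin n → ℝ := fun i => (v i).im with hb_def
  have hab : a ≠ 0 ∨ b ≠ 0 := by
    by_contra h
    push_neg at h
    apply hv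
    funext i
    have h1 := congrFun h.1 i
    have h2 := congrFun h.2 i
    simp [ha_def, hb_def] at h1 h2
    exact Complex.ext h1 h2
  set m : ℝ := (star v ⬝ᵥ (M.map Complex.ofReal) *ᵥ v).re with hm_def
  set d : ℝ := (star v ⬝ᵥ (D.map Complex.ofReal) *ᵥ v).re with hd_def
  set k : ℝ := (star v ⬝ᵥ (K.map Complex.ofReal) *ᵥ v).re with hk_def
  have hquad : ∀ (A : Matrix (Fin n) (Fin n) ℝ), A.PosSemidef →
      0 ≤ (star v ⬝ᵥ (A.map Complex.ofReal) *ᵥ v).re := by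
    intro A hA
    rw [re_quad]
    have h1 := hA.dotProduct_mulVec_nonneg a
    have h2 := hA.dotProduct_mulVec_nonneg b
    simp only [star_trivial] at h1 h2
    linarith
  have hposdef : ∀ (A : Matrix (Fin n) (Fin n) ℝ), A.PosDef →
      0 < (star v ⬝ᵥ (A.map Complex.ofReal) *ᵥ v).re := by
    intro A hA
    rw [re_quad]
    rcases hab with h | h
    · have h1 := hA.dotProduct_mulVec_pos h
      have h2 := hA.posSemidef.dotProduct_mulVec_nonneg b
      simp only [star_trivial] at h1 h2
      linarith
    · have h1 := hA.posSemidef.dotProduct_mulVec_nonneg a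
      have h2 := hA.dotProduct_mulVec_pos h
      simp only [star_trivial] at h1 h2
      linarith
  have hm : 0 < m := hposdef M hM
  have hk : 0 < k := hposdef K hK
  have hd : 0 ≤ d := hquad D hD
  have key : l ^ 2 * (m : ℂ) + l * (d : ℂ) + (k : ℂ) = 0 := by
    have h0 : star v ⬝ᵥ ((l ^ 2 • M.map (Complex.ofReal) + l • D.map (Complex.ofReal)
        + K.map (Complex.ofReal)) *ᵥ v) = 0 := by rw [hveq, dotProduct_zero]
    rw [add_mulVec, add_mulVec, smul_mulVec, smul_mulVec, dotProduct_add,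
      dotProduct_add, dotProduct_smul, dotProduct_smul, smul_eq_mul, smul_eq_mul] at h0
    rw [← h0, quad_real M hM.1, quad_real D hD.1, quad_real K hK.1]
  have hre := congrArg Complex.re key
  have him := congrArg Complex.im key
  rw [pow_two] at hre him
  simp only [Complex.add_re, Complex.add_im, Complex.mul_re, Complex.mul_im, Complex.ofReal_re,
    Complex.ofReal_im, Complex.zero_re, Complex.zero_im, mul_zero, zero_mul, sub_zero,
    add_zero, zero_add] at hre him
  -- him : (l.re * l.im + l.im * l.re) * m + l.im * d = 0
  have h2m : 0 < 2 * l.re * m + d := by nlinarith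
  have hy0 : l.im * (2 * l.re * m + d) = 0 := by nlinarith [him]
  have hy : l.im = 0 := by
    rcases mul_eq_zero.mp hy0 with h | h
    · exact h
    · exact absurd h h2m.ne'
  rw [hy] at hre
  nlinarith [mul_pos (mul_pos hpos hpos) hm, mul_nonneg hpos.le hd]
end

section
/- Projection preserves the quadratic eigenvalue stability: if M, D, K are symmetric with M, K positive definite and D positive semidefinite, and V has full column rank, then every eigenvalue of the reduced pencil λ² V^T M V + λ V^T D V + V^T K V has non-positive real part. -/
open Matrix Complex
open scoped ComplexOrder

lemma psd_map {r : ℕ} {A : Matrix (Fin r) (Fin r) ℝ} (hA : A.PosSemidef) :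
    (A.map Complex.ofReal).PosSemidef := by
  obtain ⟨B, rfl⟩ : ∃ B : Matrix (Fin r) (Fin r) ℝ, A = Bᴴ * B := by
    open scoped MatrixOrder in exact CStarAlgebra.nonneg_iff_eq_star_mul_self.mp hA.nonneg
  have h1 : (Bᴴ * B).map Complex.ofReal
      = (B.map Complex.ofReal)ᴴ * (B.map Complex.ofReal) := by
    ext i j
    simp [Matrix.mul_apply, Matrix.conjTranspose_apply]
  rw [h1]
  exact Matrix.posSemidef_conjTranspose_mul_self _

lemma pd_map {r : ℕ} {A : Matrix (Fin r) (Fin r) ℝ} (hA : A.PosDef) :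
    (A.map Complex.ofReal).PosDef := by
  have hsd := psd_map hA.posSemidef
  refine posDef_iff_dotProduct_mulVec.mpr ⟨hsd.1, fun x hx => ?_⟩
  rcases lt_or_eq_of_le (hsd.dotProduct_mulVec_nonneg x) with h | h
  · exact h
  · exfalso
    have h0 := (hsd.dotProduct_mulVec_zero_iff x).mp h.symm
    have hdet : IsUnit (A.map Complex.ofReal).det := by
      have : (A.map Complex.ofReal).det = Complex.ofReal A.det := by
        exact (RingHom.map_det Complex.ofRealHom A).symm
      rw [this]
      simp [isUnit_iff_ne_zero, hA.det_pos.ne']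
    have hinj := Matrix.mulVec_injective_iff_isUnit.mpr ((Matrix.isUnit_iff_isUnit_det _).mpr hdet)
    exact hx (hinj (by simpa using h0))

lemma VMV_pd {n r : ℕ} {M : Matrix (Fin n) (Fin n) ℝ} (hM : M.PosDef)
    {V : Matrix (Fin n) (Fin r) ℝ} (hV : V.rank = r) : (Vᵀ * M * V).PosDef := by
  have hinj : Function.Injective V.mulVecLin := by
    rw [← LinearMap.ker_eq_bot]
    have h1 := LinearMap.finrank_range_add_finrank_ker V.mulVecLin
    rw [Matrix.rank] at hV
    rw [hV] at h1
    simp only [Module.finrank_fintype_fun_eq_card, Fintype.card_fin] at h1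
    have : Module.finrank ℝ (LinearMap.ker V.mulVecLin) = 0 := by omega
    exact Submodule.finrank_eq_zero.mp this
  refine posDef_iff_dotProduct_mulVec.mpr ⟨?_, fun x hx => ?_⟩
  · show (Vᵀ * M * V)ᴴ = Vᵀ * M * V
    rw [Matrix.conjTranspose_eq_transpose_of_trivial, Matrix.transpose_mul,
      Matrix.transpose_mul, Matrix.transpose_transpose,
      show Mᵀ = M from hM.isHermitian, Matrix.mul_assoc]
  · have hVx : V *ᵥ x ≠ 0 := fun h => hx (hinj (by simpa using h))
    have := hM.dotProduct_mulVec_pos hVx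
    have heq : star x ⬝ᵥ (Vᵀ * M * V) *ᵥ x = star (V *ᵥ x) ⬝ᵥ M *ᵥ (V *ᵥ x) := by
      rw [← Matrix.mulVec_mulVec, ← Matrix.mulVec_mulVec, Matrix.dotProduct_mulVec,
        Matrix.vecMul_transpose]
      simp [star, Matrix.dotProduct_mulVec]
    rw [heq]
    exact this

lemma quad_re_nonpos {a b c : ℝ} (ha : 0 < a) (hb : 0 ≤ b) (hc : 0 < c) {l : ℂ}
    (h : (a : ℂ) * l ^ 2 + (b : ℂ) * l + (c : ℂ) = 0) : l.re ≤ 0 := by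
  by_contra hu
  push_neg at hu
  have hre := congrArg Complex.re h
  have him := congrArg Complex.im h
  simp [Complex.add_re, Complex.add_im, Complex.mul_re, Complex.mul_im, pow_two] at hre him
  have hv : l.im = 0 := by nlinarith [sq_nonneg l.im, mul_pos ha hu]
  rw [hv] at hre
  nlinarith

theorem stmt_11 (n r : ℕ)
    (M D K : Matrix (Fin n) (Fin n) ℝ)
    (hM : M.PosDef) (hK : K.PosDef) (hD : D.PosSemidef)
    (V : Matrix (Fin n) (Fin r) ℝ) (hV : V.rank = r)
    (l : ℂ)
    (hdet : (l ^ 2 • (V.transpose * M * V).map (Complex.ofReal)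
      + l • (V.transpose * D * V).map (Complex.ofReal)
      + (V.transpose * K * V).map (Complex.ofReal)).det = 0) :
    l.re ≤ 0 := by
  obtain ⟨x, hx, hQx⟩ := Matrix.exists_mulVec_eq_zero_iff.mpr hdet
  set A := (Vᵀ * M * V).map Complex.ofReal
  set B := (Vᵀ * D * V).map Complex.ofReal
  set C := (Vᵀ * K * V).map Complex.ofReal
  have hA : A.PosDef := pd_map (VMV_pd hM hV)
  have hC : C.PosDef := pd_map (VMV_pd hK hV)
  have hB : B.PosSemidef := by
    apply psd_map
    have := hD.conjTranspose_mul_mul_same V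
    simpa [Matrix.conjTranspose_eq_transpose_of_trivial, Matrix.mul_assoc] using this
  have ha := hA.dotProduct_mulVec_pos hx
  have hc := hC.dotProduct_mulVec_pos hx
  have hb := hB.dotProduct_mulVec_nonneg x
  -- extract scalar equation
  have key : l ^ 2 * (star x ⬝ᵥ A *ᵥ x) + l * (star x ⬝ᵥ B *ᵥ x) + (star x ⬝ᵥ C *ᵥ x) = 0 := by
    have : star x ⬝ᵥ ((l ^ 2 • A + l • B + C) *ᵥ x) = 0 := by rw [hQx]; simp
    simpa [Matrix.add_mulVec, Matrix.smul_mulVec, dotProduct_add, dotProduct_smul,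
      smul_eq_mul, mul_comm] using this
  rw [RCLike.pos_iff] at ha hc
  rw [RCLike.nonneg_iff] at hb
  set a := star x ⬝ᵥ A *ᵥ x
  set b := star x ⬝ᵥ B *ᵥ x
  set c := star x ⬝ᵥ C *ᵥ x
  have haa : a = (a.re : ℂ) := Complex.ext rfl (by simpa using ha.2)
  have hbb : b = (b.re : ℂ) := Complex.ext rfl (by simpa using hb.2)
  have hcc : c = (c.re : ℂ) := Complex.ext rfl (by simpa using hc.2)
  refine quad_re_nonpos (a := a.re) (b := b.re) (c := c.re) ?_ ?_ ?_ ?_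
  · simpa using ha.1
  · simpa using hb.1
  · simpa using hc.1
  · rw [← haa, ← hbb, ← hcc]
    linear_combination key
end
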